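/- For the complete graph K_n with attachment set At(K_n) ⊆ V(K_n): if |At(K_n)| < n − 1 then fdim*(K_n) = n − |At(K_n)|, and if |At(K_n)| ≥ n − 1 then fdim*(K_n) = 0. -/
import Mathlib


open SimpleGraph

/-- `X` is a resolving set of `G`: every pair of distinct vertices is
distinguished by the distance to some vertex of `X`. -/
def isResolving {V : Type*} (G : SimpleGraph V) (X : Set V) : Prop :=
  ∀ u v : V, u ≠ v → ∃ x ∈ X, G.dist u x ≠ G.dist v x

/-- `X` is a fault-tolerant resolving set of `G`. -/
def isFTResolving {V : Type*} (G : SimpleGraph V) (X : Set V) : Prop :=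
  ∀ s ∈ X, isResolving G (X \ {s})

/-- The fault-tolerant metric dimension of `G`. -/
noncomputable def fdim {V : Type*} (G : SimpleGraph V) : ℕ :=
  sInf {n | ∃ X : Set V, isFTResolving G X ∧ X.ncard = n}

/-- The attaching fault-tolerant metric dimension of `G` with respect to the
attachment set `At`. -/
noncomputable def fdimStar {V : Type*} (G : SimpleGraph V) (At : Set V) : ℕ :=
  sInf {n | ∃ F : Set V, F ⊆ Atᶜ ∧ isResolving G (F ∪ At) ∧
    (∀ x ∈ F, isResolving G ((F ∪ At) \ {x})) ∧ F.ncard = n}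

lemma dist_top {n : ℕ} (u x : Fin n) :
    (⊤ : SimpleGraph (Fin n)).dist u x = if u = x then 0 else 1 := by
  split
  · subst ‹u = x›; exact SimpleGraph.dist_self
  · exact (SimpleGraph.dist_eq_one_iff_adj).mpr (by simpa using ‹¬ u = x›)

lemma res_iff {n : ℕ} (X : Set (Fin n)) :
    isResolving (⊤ : SimpleGraph (Fin n)) X ↔
      ∀ u v : Fin n, u ≠ v → u ∈ X ∨ v ∈ X := by
  constructor
  · intro h u v huv
    by_contra hc
    push_neg at hc
    obtain ⟨x, hxX, hx⟩ := h u v huv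
    have hxu : u ≠ x := fun e => hc.1 (e ▸ hxX)
    have hxv : v ≠ x := fun e => hc.2 (e ▸ hxX)
    rw [dist_top, dist_top, if_neg hxu, if_neg hxv] at hx
    exact hx rfl
  · intro h u v huv
    rcases h u v huv with hu | hv
    · exact ⟨u, hu, by rw [dist_top, dist_top, if_pos rfl, if_neg (Ne.symm huv)]; simp⟩
    · exact ⟨v, hv, by rw [dist_top, dist_top, if_pos rfl, if_neg huv]; simp⟩

/-- For the complete graph `K_n`: if `|At| < n - 1` then
`fdim*(K_n) = n - |At|`, and if `|At| ≥ n - 1` then `fdim*(K_n) = 0`. -/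
theorem fdimStar_completeGraph (n : ℕ) (At : Set (Fin n)) :
    (At.ncard + 1 < n → fdimStar (⊤ : SimpleGraph (Fin n)) At = n - At.ncard) ∧
    (n ≤ At.ncard + 1 → fdimStar (⊤ : SimpleGraph (Fin n)) At = 0) := by
  have hcard : At.ncard + Atᶜ.ncard = n := by
    simpa using Set.ncard_add_ncard_compl At
  constructor
  · intro hlt
    have hc : Atᶜ.ncard = n - At.ncard := by omega
    have hset : {m | ∃ F : Set (Fin n), F ⊆ Atᶜ ∧
        isResolving (⊤ : SimpleGraph (Fin n)) (F ∪ At) ∧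
        (∀ x ∈ F, isResolving (⊤ : SimpleGraph (Fin n)) ((F ∪ At) \ {x})) ∧
        F.ncard = m} = {n - At.ncard} := by
      ext m
      simp only [Set.mem_setOf_eq, Set.mem_singleton_iff]
      constructor
      · rintro ⟨F, hFsub, hres, hft, rfl⟩
        -- F must be nonempty
        have hFne : F.Nonempty := by
          by_contra hFe
          rw [Set.not_nonempty_iff_eq_empty] at hFe
          subst hFe
          rw [Set.empty_union, res_iff] at hres
          have : Atᶜ.ncard ≤ 1 := by
            by_contra hgt
            push_neg at hgt
            obtain ⟨a, b, ha, hb, hab⟩ := (Set.one_lt_ncard_iff (Set.toFinite _)).mp hgt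
            rcases hres a b hab with h | h
            · exact ha h
            · exact hb h
          omega
        obtain ⟨x₀, hx₀⟩ := hFne
        have huniv : F ∪ At = Set.univ := by
          ext y
          simp only [Set.mem_univ, iff_true]
          by_contra hy
          have hyx : y ≠ x₀ := fun e => hy (e ▸ Or.inl hx₀)
          rcases (res_iff _).mp (hft x₀ hx₀) y x₀ hyx with h | h
          · exact hy h.1
          · exact h.2 rfl
        have hFeq : F = Atᶜ := by
          apply Set.Subset.antisymm hFsub
          intro a ha
          have : a ∈ F ∪ At := huniv ▸ Set.mem_univ a
          rcases this with h | h
          · exact h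
          · exact absurd h ha
        rw [hFeq, hc]
      · rintro rfl
        refine ⟨Atᶜ, le_refl _, ?_, ?_, hc⟩
        · rw [res_iff]; intro u v _; left; simp [Set.mem_union, em]
        · intro x hx
          rw [res_iff]
          intro u v huv
          rcases eq_or_ne u x with rfl | hu
          · right
            exact ⟨by simp [Set.mem_union, em], Ne.symm huv⟩
          · left
            exact ⟨by simp [Set.mem_union, em], hu⟩
    rw [fdimStar, hset, csInf_singleton]
  · intro hge
    have h0 : 0 ∈ {m | ∃ F : Set (Fin n), F ⊆ Atᶜ ∧
        isResolving (⊤ : SimpleGraph (Fin n)) (F ∪ At) ∧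
        (∀ x ∈ F, isResolving (⊤ : SimpleGraph (Fin n)) ((F ∪ At) \ {x})) ∧
        F.ncard = 0} := by
      refine ⟨∅, Set.empty_subset _, ?_, by simp, Set.ncard_empty _⟩
      rw [Set.empty_union, res_iff]
      intro u v huv
      by_contra hcon
      push_neg at hcon
      have : 1 < Atᶜ.ncard :=
        (Set.one_lt_ncard_iff (Set.toFinite _)).mpr ⟨u, v, hcon.1, hcon.2, huv⟩
      omega
    exact Nat.sInf_eq_zero.mpr (Or.inl h0)
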